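/- Let F, G : ℝ⁴ → ℝ be smooth functions of (w, z, x, y), and define p := F_y, q := −(F_x + G_y)/2, r := G_x, together with m := p_z − q_w + p q_x − q p_x + q q_y − r p_y and n := q_z − r_w + q r_y − r q_y + p r_x − q q_x. Then: (i) the first equation of (SD), p_{xx} + 2q_{xy} + r_{yy} = 0, holds identically; and (ii) the remaining two equations of (SD), m_x + n_y = 0 and m_z − q m_x − r m_y + (q_x + r_y) m = n_w − p n_x − q n_y + (p_x + q_y) n, hold at every point if and only if (F, G) satisfies the system (sd_3rd): ∂_x(Q(F)) − ∂_y(Q(G)) = 0 and (∂_w − F_y∂_x + G_y∂_y)Q(G) + (∂_z + F_x∂_x − G_x∂_y)Q(F) = 0, where Q = ∂_w∂_x + ∂_z∂_y − F_y∂_x² − G_x∂_y² + (F_x + G_y)∂_x∂_y. -/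

import Mathlib

noncomputable section

/-- Partial derivative of `f` along the `i`-th coordinate direction on `ℝⁿ`.
Coordinates on `ℝ⁴` are `(w, z, x, y) = (0, 1, 2, 3)`. -/
def pd {n : ℕ} (i : Fin n) (f : (Fin n → ℝ) → ℝ) : (Fin n → ℝ) → ℝ :=
  fun x => fderiv ℝ f x (Pi.single i 1)

/-- `m = p_z − q_w + p q_x − q p_x + q q_y − r p_y`. -/
def mSD (p q r : (Fin 4 → ℝ) → ℝ) : (Fin 4 → ℝ) → ℝ :=
  fun x =>
    pd 1 p x - pd 0 q x + p x * pd 2 q x - q x * pd 2 p x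
      + q x * pd 3 q x - r x * pd 3 p x

/-- `n = q_z − r_w + q r_y − r q_y + p r_x − q q_x`. -/
def nSD (p q r : (Fin 4 → ℝ) → ℝ) : (Fin 4 → ℝ) → ℝ :=
  fun x =>
    pd 1 q x - pd 0 r x + q x * pd 3 r x - r x * pd 3 q x
      + p x * pd 2 r x - q x * pd 2 q x

/-- First equation of system (SD): `p_{xx} + 2q_{xy} + r_{yy} = 0`. -/
def SDeq1 (p q r : (Fin 4 → ℝ) → ℝ) : Prop :=
  ∀ x : Fin 4 → ℝ, pd 2 (pd 2 p) x + 2 * pd 2 (pd 3 q) x + pd 3 (pd 3 r) x = 0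

/-- Second equation of system (SD): `m_x + n_y = 0`. -/
def SDeq2 (p q r : (Fin 4 → ℝ) → ℝ) : Prop :=
  ∀ x : Fin 4 → ℝ, pd 2 (mSD p q r) x + pd 3 (nSD p q r) x = 0

/-- Third equation of system (SD):
`m_z − q m_x − r m_y + (q_x + r_y)m = n_w − p n_x − q n_y + (p_x + q_y)n`. -/
def SDeq3 (p q r : (Fin 4 → ℝ) → ℝ) : Prop :=
  ∀ x : Fin 4 → ℝ,
    pd 1 (mSD p q r) x - q x * pd 2 (mSD p q r) x - r x * pd 3 (mSD p q r) x
        + (pd 2 q x + pd 3 r x) * mSD p q r x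
      = pd 0 (nSD p q r) x - p x * pd 2 (nSD p q r) x - q x * pd 3 (nSD p q r) x
        + (pd 2 p x + pd 3 q x) * nSD p q r x

/-- The operator `Q = ∂_w∂_x + ∂_z∂_y − F_y∂_x² − G_x∂_y² + (F_x + G_y)∂_x∂_y`
applied to `h`. -/
def Qop (F G h : (Fin 4 → ℝ) → ℝ) : (Fin 4 → ℝ) → ℝ :=
  fun x =>
    pd 0 (pd 2 h) x + pd 1 (pd 3 h) x - pd 3 F x * pd 2 (pd 2 h) x
      - pd 2 G x * pd 3 (pd 3 h) x + (pd 2 F x + pd 3 G x) * pd 2 (pd 3 h) x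

/-- First equation of system (sd_3rd): `∂_x(Q(F)) − ∂_y(Q(G)) = 0`. -/
def sd3rd1 (F G : (Fin 4 → ℝ) → ℝ) : Prop :=
  ∀ x : Fin 4 → ℝ, pd 2 (Qop F G F) x - pd 3 (Qop F G G) x = 0

/-- Second equation of system (sd_3rd):
`(∂_w − F_y∂_x + G_y∂_y)Q(G) + (∂_z + F_x∂_x − G_x∂_y)Q(F) = 0`. -/
def sd3rd2 (F G : (Fin 4 → ℝ) → ℝ) : Prop :=
  ∀ x : Fin 4 → ℝ,
    (pd 0 (Qop F G G) x - pd 3 F x * pd 2 (Qop F G G) x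
        + pd 3 G x * pd 3 (Qop F G G) x)
      + (pd 1 (Qop F G F) x + pd 2 F x * pd 2 (Qop F G F) x
        - pd 2 G x * pd 3 (Qop F G F) x) = 0

namespace PDcalc

variable {n : ℕ} {f g : (Fin n → ℝ) → ℝ} {i j : Fin n}

@[fun_prop] lemma contDiff_pd (i : Fin n) (hf : ContDiff ℝ (⊤ : ℕ∞) f) :
    ContDiff ℝ (⊤ : ℕ∞) (pd i f) := by
  have h1 : ContDiff ℝ (⊤ : ℕ∞) (fderiv ℝ f) := (contDiff_infty_iff_fderiv.mp hf).2
  exact h1.clm_apply contDiff_const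

@[fun_prop] lemma differentiable_pd (i : Fin n) (hf : ContDiff ℝ (⊤ : ℕ∞) f) :
    Differentiable ℝ (pd i f) :=
  (contDiff_pd i hf).differentiable (by simp)

lemma pd_add (hf : Differentiable ℝ f) (hg : Differentiable ℝ g) :
    pd i (fun x => f x + g x) = fun x => pd i f x + pd i g x := by
  funext x
  simp only [pd, fderiv_fun_add (hf x) (hg x), ContinuousLinearMap.add_apply]

lemma pd_sub (hf : Differentiable ℝ f) (hg : Differentiable ℝ g) :
    pd i (fun x => f x - g x) = fun x => pd i f x - pd i g x := by
  funext x
  simp only [pd, fderiv_fun_sub (hf x) (hg x), ContinuousLinearMap.sub_apply]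

lemma pd_neg : pd i (fun x => -f x) = fun x => -pd i f x := by
  funext x
  simp only [pd, fderiv_fun_neg, ContinuousLinearMap.neg_apply]

lemma pd_mul (hf : Differentiable ℝ f) (hg : Differentiable ℝ g) :
    pd i (fun x => f x * g x) = fun x => f x * pd i g x + g x * pd i f x := by
  funext x
  simp only [pd, fderiv_fun_mul (hf x) (hg x), ContinuousLinearMap.add_apply,
    ContinuousLinearMap.smul_apply, smul_eq_mul]

lemma pd_div_const (hf : Differentiable ℝ f) (c : ℝ) :
    pd i (fun x => f x / c) = fun x => pd i f x / c := by
  funext x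
  simp only [pd, div_eq_mul_inv]
  rw [fderiv_mul_const (hf x)]
  simp [smul_eq_mul, mul_comm]

lemma pd_comm (hf : ContDiff ℝ (⊤ : ℕ∞) f) (i j : Fin n) :
    pd i (pd j f) = pd j (pd i f) := by
  funext x
  have hd : DifferentiableAt ℝ (fderiv ℝ f) x :=
    ((contDiff_infty_iff_fderiv.mp hf).2.differentiable (by simp)) x
  have key : ∀ a b : Fin n, pd a (pd b f) x =
      fderiv ℝ (fderiv ℝ f) x (Pi.single a 1) (Pi.single b 1) := by
    intro a b
    show fderiv ℝ (fun y => (fderiv ℝ f y) (Pi.single b 1)) x (Pi.single a 1) = _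
    rw [fderiv_clm_apply hd (differentiableAt_const _)]
    simp
  rw [key i j, key j i]
  have hsymm : IsSymmSndFDerivAt ℝ f x := by
    apply hf.contDiffAt.isSymmSndFDerivAt
    rw [show (2 : WithTop ℕ∞) = ((2:ℕ∞) : WithTop ℕ∞) from rfl]; rw [minSmoothness_of_isRCLikeNormedField]; exact WithTop.coe_le_coe.2 le_top
  exact hsymm _ _

lemma pd_sorted (hf : ContDiff ℝ (⊤ : ℕ∞) f) (h : j < i) :
    pd i (pd j f) = pd j (pd i f) := pd_comm hf i j

end PDcalc

open PDcalc in
set_option maxHeartbeats 2000000 in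
lemma keyB (F G : (Fin 4 → ℝ) → ℝ) (hF : ContDiff ℝ (⊤ : ℕ∞) F) (hG : ContDiff ℝ (⊤ : ℕ∞) G)
    (x : Fin 4 → ℝ) :
    pd 2 (mSD (pd 3 F) (fun x => -(pd 2 F x + pd 3 G x) / 2) (pd 2 G)) x
      + pd 3 (nSD (pd 3 F) (fun x => -(pd 2 F x + pd 3 G x) / 2) (pd 2 G)) x
      = (pd 2 (Qop F G F) x - pd 3 (Qop F G G) x) / 2 := by
  unfold mSD nSD Qop
  simp (disch := fun_prop) only [pd_div_const, pd_neg, pd_add, pd_sub, pd_mul]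
  simp (disch := first | decide | fun_prop) only [pd_sorted]
  ring


open PDcalc in
set_option maxHeartbeats 4000000 in
lemma keyC (F G : (Fin 4 → ℝ) → ℝ) (hF : ContDiff ℝ (⊤ : ℕ∞) F) (hG : ContDiff ℝ (⊤ : ℕ∞) G)
    (x : Fin 4 → ℝ) :
    (pd 1 (mSD (pd 3 F) (fun x => -(pd 2 F x + pd 3 G x) / 2) (pd 2 G)) x
      - (fun x => -(pd 2 F x + pd 3 G x) / 2) x
          * pd 2 (mSD (pd 3 F) (fun x => -(pd 2 F x + pd 3 G x) / 2) (pd 2 G)) x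
      - pd 2 G x * pd 3 (mSD (pd 3 F) (fun x => -(pd 2 F x + pd 3 G x) / 2) (pd 2 G)) x
      + (pd 2 (fun x => -(pd 2 F x + pd 3 G x) / 2) x + pd 3 (pd 2 G) x)
          * mSD (pd 3 F) (fun x => -(pd 2 F x + pd 3 G x) / 2) (pd 2 G) x)
    - (pd 0 (nSD (pd 3 F) (fun x => -(pd 2 F x + pd 3 G x) / 2) (pd 2 G)) x
      - pd 3 F x * pd 2 (nSD (pd 3 F) (fun x => -(pd 2 F x + pd 3 G x) / 2) (pd 2 G)) x
      - (fun x => -(pd 2 F x + pd 3 G x) / 2) x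
          * pd 3 (nSD (pd 3 F) (fun x => -(pd 2 F x + pd 3 G x) / 2) (pd 2 G)) x
      + (pd 2 (pd 3 F) x + pd 3 (fun x => -(pd 2 F x + pd 3 G x) / 2) x)
          * nSD (pd 3 F) (fun x => -(pd 2 F x + pd 3 G x) / 2) (pd 2 G) x)
    = ((pd 0 (Qop F G G) x - pd 3 F x * pd 2 (Qop F G G) x + pd 3 G x * pd 3 (Qop F G G) x)
        + (pd 1 (Qop F G F) x + pd 2 F x * pd 2 (Qop F G F) x - pd 2 G x * pd 3 (Qop F G F) x))
      + (pd 3 G x - pd 2 F x) / 2 * (pd 2 (Qop F G F) x - pd 3 (Qop F G G) x) := by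
  unfold mSD nSD Qop
  simp (disch := fun_prop) only [pd_div_const, pd_neg, pd_add, pd_sub, pd_mul]
  simp (disch := first | decide | fun_prop) only [pd_sorted]
  ring


/-- For `p = F_y`, `q = −(F_x + G_y)/2`, `r = G_x` the first (SD) equation holds
identically, and the remaining two (SD) equations hold iff `(F, G)` solves the
system (sd_3rd). -/
theorem SD_reduces_to_sd3rd
    (F G : (Fin 4 → ℝ) → ℝ)
    (hF : ContDiff ℝ (⊤ : ℕ∞) F)
    (hG : ContDiff ℝ (⊤ : ℕ∞) G) :
    SDeq1 (pd 3 F) (fun x => -(pd 2 F x + pd 3 G x) / 2) (pd 2 G) ∧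
    ((SDeq2 (pd 3 F) (fun x => -(pd 2 F x + pd 3 G x) / 2) (pd 2 G) ∧
      SDeq3 (pd 3 F) (fun x => -(pd 2 F x + pd 3 G x) / 2) (pd 2 G)) ↔
     (sd3rd1 F G ∧ sd3rd2 F G)) := by
  open PDcalc in
  constructor
  · intro x
    simp (disch := fun_prop) only [pd_div_const, pd_neg, pd_add, pd_sub, pd_mul]
    simp (disch := first | decide | fun_prop) only [pd_sorted]
    ring
  · constructor
    · rintro ⟨h2, h3⟩
      have hs1 : sd3rd1 F G := by
        intro x
        have hB := keyB F G hF hG x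
        have h2x := h2 x
        linarith
      refine ⟨hs1, fun x => ?_⟩
      have hC := keyC F G hF hG x
      have h3x := h3 x
      rw [hs1 x] at hC
      linarith
    · rintro ⟨h1, h2'⟩
      constructor
      · intro x
        have hB := keyB F G hF hG x
        have := h1 x
        linarith
      · intro x
        have hC := keyC F G hF hG x
        rw [h1 x] at hC
        have := h2' x
        linarith
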